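/- arXiv:1304.3042 — 3 statements merged into one kernel-verified Lean document; each statement's English description precedes it below -/
import Mathlib

section
/- If a function f : Iⁿ → ℝ is comonotonic maxitive, or comonotonic minitive, then f is nondecreasing in each argument. -/
/-- `S↑_σ(i)` (0-indexed): the set `{σ(i), σ(i+1), …, σ(n-1)}`.  For `i = n` it is empty. -/
def SUp {n : ℕ} (σ : Equiv.Perm (Fin n)) (i : ℕ) : Finset (Fin n) :=
  (Finset.univ.filter (fun j : Fin n => i ≤ (j : ℕ))).image σ

/-- `S↓_σ(i)`: the set `{σ(0), …, σ(i-1)}`.  For `i = 0` it is empty. -/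
def SDown {n : ℕ} (σ : Equiv.Perm (Fin n)) (i : ℕ) : Finset (Fin n) :=
  (Finset.univ.filter (fun j : Fin n => (j : ℕ) < i)).image σ

/-- Two tuples are comonotonic if some permutation sorts both nondecreasingly. -/
def Comonotone {n : ℕ} (x y : Fin n → ℝ) : Prop :=
  ∃ σ : Equiv.Perm (Fin n), Monotone (x ∘ σ) ∧ Monotone (y ∘ σ)

/-- The tuple `r·1_S`. -/
def indTuple {n : ℕ} (S : Finset (Fin n)) (r : ℝ) : Fin n → ℝ :=
  fun j => if j ∈ S then r else 0

/-- The signed Choquet integral of `x` w.r.t. `v`, computed via a sorting permutation. -/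
noncomputable def Cv {n : ℕ} (v : Finset (Fin n) → ℝ) (x : Fin n → ℝ) : ℝ :=
  ∑ i : Fin n,
    x (Tuple.sort x i) *
      (v (SUp (Tuple.sort x) (i : ℕ)) - v (SUp (Tuple.sort x) ((i : ℕ) + 1)))

/-- `f` is the restriction to `Iⁿ` of a signed Choquet integral. -/
def IsSignedChoquetOn {n : ℕ} (I : Set ℝ) (f : (Fin n → ℝ) → ℝ) : Prop :=
  ∃ v : Finset (Fin n) → ℝ, v ∅ = 0 ∧
    ∀ σ : Equiv.Perm (Fin n), ∀ x : Fin n → ℝ, (∀ i, x i ∈ I) → Monotone (x ∘ σ) →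
      f x = ∑ i : Fin n, x (σ i) * (v (SUp σ (i : ℕ)) - v (SUp σ ((i : ℕ) + 1)))

/-- `f` is the restriction to `Iⁿ` of a symmetric signed Choquet integral
`Č_v(x) = C_v(x⁺) - C_v(x⁻)`. -/
def IsSymSignedChoquetOn {n : ℕ} (I : Set ℝ) (f : (Fin n → ℝ) → ℝ) : Prop :=
  ∃ v : Finset (Fin n) → ℝ, v ∅ = 0 ∧
    ∀ x : Fin n → ℝ, (∀ i, x i ∈ I) →
      f x = Cv v (fun i => max (x i) 0) - Cv v (fun i => max (-x i) 0)

/-- Comonotonic modularity (on tuples with entries in `D`). -/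
def ComonModularOn {n : ℕ} (D : Set ℝ) (f : (Fin n → ℝ) → ℝ) : Prop :=
  ∀ x y : Fin n → ℝ, (∀ i, x i ∈ D) → (∀ i, y i ∈ D) → Comonotone x y →
    f x + f y = f (fun i => min (x i) (y i)) + f (fun i => max (x i) (y i))

/-- Comonotonic additivity (on tuples with entries in `D`). -/
def ComonAdditiveOn {n : ℕ} (D : Set ℝ) (f : (Fin n → ℝ) → ℝ) : Prop :=
  ∀ x y : Fin n → ℝ, (∀ i, x i ∈ D) → (∀ i, y i ∈ D) → Comonotone x y →
    (∀ i, x i + y i ∈ D) → f (fun i => x i + y i) = f x + f y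

/-- Comonotonic maxitivity. -/
def ComonMaxitiveOn {n : ℕ} (D : Set ℝ) (f : (Fin n → ℝ) → ℝ) : Prop :=
  ∀ x y : Fin n → ℝ, (∀ i, x i ∈ D) → (∀ i, y i ∈ D) → Comonotone x y →
    f (fun i => max (x i) (y i)) = max (f x) (f y)

/-- Comonotonic minitivity. -/
def ComonMinitiveOn {n : ℕ} (D : Set ℝ) (f : (Fin n → ℝ) → ℝ) : Prop :=
  ∀ x y : Fin n → ℝ, (∀ i, x i ∈ D) → (∀ i, y i ∈ D) → Comonotone x y →
    f (fun i => min (x i) (y i)) = min (f x) (f y)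

/-- Horizontal min-additivity. -/
def HorizMinAdditiveOn {n : ℕ} (D : Set ℝ) (f : (Fin n → ℝ) → ℝ) : Prop :=
  ∀ x : Fin n → ℝ, (∀ i, x i ∈ D) → ∀ c ∈ D, (∀ i, x i - min (x i) c ∈ D) →
    f x = f (fun i => min (x i) c) + f (fun i => x i - min (x i) c)

/-- Horizontal max-additivity. -/
def HorizMaxAdditiveOn {n : ℕ} (D : Set ℝ) (f : (Fin n → ℝ) → ℝ) : Prop :=
  ∀ x : Fin n → ℝ, (∀ i, x i ∈ D) → ∀ c ∈ D, (∀ i, x i - max (x i) c ∈ D) →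
    f x = f (fun i => max (x i) c) + f (fun i => x i - max (x i) c)

/-- Horizontal median-additivity (for `I` centered at `0`). -/
def HorizMedAdditiveOn {n : ℕ} (I : Set ℝ) (f : (Fin n → ℝ) → ℝ) : Prop :=
  ∀ x : Fin n → ℝ, (∀ i, x i ∈ I) → ∀ c ∈ I, 0 ≤ c →
    f x = f (fun i => max (-c) (min (x i) c)) + f (fun i => x i - min (x i) c)
        + f (fun i => x i - max (x i) (-c))

/-- Invariance under horizontal min-differences (for domains of nonnegative tuples). -/
def InvHMinDiffOn {n : ℕ} (D : Set ℝ) (f : (Fin n → ℝ) → ℝ) : Prop :=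
  ∀ x : Fin n → ℝ, (∀ i, x i ∈ D) → ∀ c ∈ D,
    f x - f (fun i => min (x i) c) =
      f (fun i => if x i ≤ c then 0 else x i) -
        f (fun i => min (if x i ≤ c then 0 else x i) c)

/-- Invariance under horizontal max-differences (for domains of nonpositive tuples). -/
def InvHMaxDiffOn {n : ℕ} (D : Set ℝ) (f : (Fin n → ℝ) → ℝ) : Prop :=
  ∀ x : Fin n → ℝ, (∀ i, x i ∈ D) → ∀ c ∈ D,
    f x - f (fun i => max (x i) c) =
      f (fun i => if c ≤ x i then 0 else x i) -
        f (fun i => max (if c ≤ x i then 0 else x i) c)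

/-- `⋀_{i ∈ S} x i`, with the convention that the empty infimum is `b`. -/
noncomputable def infWith {n : ℕ} (b : ℝ) (S : Finset (Fin n)) (x : Fin n → ℝ) : ℝ :=
  if h : S.Nonempty then S.inf' h x else b

/-- An `[a,b]`-valued capacity. -/
def IsCapacityOn {n : ℕ} (a b : ℝ) (μ : Finset (Fin n) → ℝ) : Prop :=
  μ ∅ = a ∧ μ Finset.univ = b ∧ ∀ S T : Finset (Fin n), S ⊆ T → μ S ≤ μ T

/-- `f` is nondecreasing (in each argument) on tuples with entries in `D`. -/
def NondecreasingOn {n : ℕ} (D : Set ℝ) (f : (Fin n → ℝ) → ℝ) : Prop :=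
  ∀ x y : Fin n → ℝ, (∀ i, x i ∈ D) → (∀ i, y i ∈ D) → (∀ i, x i ≤ y i) → f x ≤ f y


-- comonotone from a common key
lemma comono_of_key {n : ℕ} (x y k : Fin n → ℝ)
    (h : ∀ i j, k i ≤ k j → x i ≤ x j ∧ y i ≤ y j) : Comonotone x y := by
  refine ⟨Tuple.sort k, ?_, ?_⟩ <;> intro a b hab
  · exact (h _ _ (Tuple.monotone_sort k hab)).1
  · exact (h _ _ (Tuple.monotone_sort k hab)).2

lemma comono_const {n : ℕ} (x : Fin n → ℝ) (c : ℝ) : Comonotone x (fun _ => c) :=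
  ⟨Tuple.sort x, Tuple.monotone_sort x, monotone_const⟩

lemma comono_neg {n : ℕ} {x y : Fin n → ℝ} (h : Comonotone x y) :
    Comonotone (fun i => -x i) (fun i => -y i) := by
  obtain ⟨σ, hx, hy⟩ := h
  refine ⟨(Fin.revPerm).trans σ, ?_, ?_⟩ <;> intro a b hab <;>
    simp only [Function.comp, Equiv.trans_apply, Fin.revPerm_apply, neg_le_neg_iff]
  · exact hx (Fin.rev_le_rev.mpr hab)
  · exact hy (Fin.rev_le_rev.mpr hab)

lemma mem_min {I : Set ℝ} {a b : ℝ} (ha : a ∈ I) (hb : b ∈ I) : min a b ∈ I := by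
  rcases le_total a b with h | h
  · rwa [min_eq_left h]
  · rwa [min_eq_right h]

lemma mem_max {I : Set ℝ} {a b : ℝ} (ha : a ∈ I) (hb : b ∈ I) : max a b ∈ I := by
  rcases le_total a b with h | h
  · rwa [max_eq_right h]
  · rwa [max_eq_left h]

lemma step_comono {n : ℕ} (x y : Fin n → ℝ) (hxy : ∀ i, x i ≤ y i) (c c' : ℝ) (hcc : c < c')
    (hy : ∀ i, y i ≤ c ∨ c' ≤ y i) :
    Comonotone (fun i => max (x i) (min (y i) c)) (fun i => min (y i) c') := by
  apply comono_of_key _ _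
    (fun i => max (x i) (min (y i) c) + (if c < y i then c' - c else 0))
  intro i j hk
  rcases hy i with hi | hi
  · -- y i ≤ c
    have hzi : max (x i) (min (y i) c) = y i := by
      rw [min_eq_left hi, max_eq_right (hxy i)]
    have hwi : min (y i) c' = y i := min_eq_left (hi.trans hcc.le)
    have hki : ¬ c < y i := not_lt.mpr hi
    rcases hy j with hj | hj
    · have hzj : max (x j) (min (y j) c) = y j := by
        rw [min_eq_left hj, max_eq_right (hxy j)]
      have hkj : ¬ c < y j := not_lt.mpr hj
      rw [if_neg hki, if_neg hkj, add_zero, add_zero] at hk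
      constructor
      · exact hk
      · rw [hwi, min_eq_left (hj.trans hcc.le)]
        rw [hzi, hzj] at hk; exact hk
    · have hkj : c < y j := hcc.trans_le hj
      have hzj : c ≤ max (x j) (min (y j) c) := le_max_of_le_right (by
        rw [min_eq_right (hcc.le.trans hj)])
      constructor
      · rw [hzi]; exact hi.trans hzj
      · rw [hwi, min_eq_right hj]; exact hi.trans hcc.le
  · -- c' ≤ y i
    have hki : c < y i := hcc.trans_le hi
    have hzi : c ≤ max (x i) (min (y i) c) := le_max_of_le_right (by
      rw [min_eq_right (hcc.le.trans hi)])
    rcases hy j with hj | hj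
    · -- impossible: k i ≥ c' > c ≥ k j
      exfalso
      have hkj : ¬ c < y j := not_lt.mpr hj
      rw [if_pos hki, if_neg hkj, add_zero] at hk
      have h1 : c' ≤ max (x i) (min (y i) c) + (c' - c) := by linarith [hzi]
      have h2 : max (x j) (min (y j) c) ≤ c := by
        apply max_le
        · exact (hxy j).trans hj
        · exact min_le_right _ _
      linarith
    · have hkj : c < y j := hcc.trans_le hj
      rw [if_pos hki, if_pos hkj] at hk
      constructor
      · linarith
      · rw [min_eq_right hi, min_eq_right hj]

lemma max_min_join (a b c c' : ℝ) (h : c ≤ c') :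
    max (max a (min b c)) (min b c') = max a (min b c') := by
  rw [max_assoc, max_eq_right (min_le_min_left b h)]

lemma maxitive_nondecreasing {n : ℕ} (hn : 0 < n) (I : Set ℝ) (f : (Fin n → ℝ) → ℝ)
    (hf : ComonMaxitiveOn I f) : NondecreasingOn I f := by
  intro x y hx hy hxy
  haveI : Nonempty (Fin n) := ⟨⟨0, hn⟩⟩
  set T : Finset ℝ := Finset.image y Finset.univ with hT
  have hTne : T.Nonempty := ⟨y (Classical.arbitrary _), Finset.mem_image_of_mem _ (Finset.mem_univ _)⟩
  have hmemT : ∀ c ∈ T, c ∈ I := by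
    intro c hc
    obtain ⟨i, _, rfl⟩ := Finset.mem_image.mp hc
    exact hy i
  have hmemz : ∀ c ∈ I, ∀ i, max (x i) (min (y i) c) ∈ I := fun c hc i =>
    mem_max (hx i) (mem_min (hy i) hc)
  have key : ∀ m : ℕ, ∀ c ∈ T, (T.filter (fun v => v < c)).card = m →
      f x ≤ f (fun i => max (x i) (min (y i) c)) := by
    intro m
    induction m using Nat.strong_induction_on with
    | _ m ih =>
      intro c hcT hcard
      rcases Finset.eq_empty_or_nonempty (T.filter (fun v => v < c)) with he | hne
      · -- c is the minimum of T
        have hcy : ∀ i, c ≤ y i := by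
          intro i
          by_contra hlt
          push_neg at hlt
          exact (Finset.eq_empty_iff_forall_notMem.mp he (y i))
            (Finset.mem_filter.mpr ⟨Finset.mem_image_of_mem _ (Finset.mem_univ _), hlt⟩)
        have heq : (fun i => max (x i) (min (y i) c)) =
            fun i => max (x i) ((fun _ => c) i) := by
          funext i; rw [min_eq_right (hcy i)]
        rw [heq, hf x (fun _ => c) hx (fun _ => hmemT c hcT) (comono_const x c)]
        exact le_max_left _ _
      · -- predecessor
        set S := T.filter (fun v => v < c) with hS
        set p := S.max' hne with hp
        have hpS : p ∈ S := S.max'_mem hne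
        have hpT : p ∈ T := (Finset.mem_filter.mp hpS).1
        have hpc : p < c := (Finset.mem_filter.mp hpS).2
        have hsub : T.filter (fun v => v < p) ⊆ S := by
          intro v hv
          have := Finset.mem_filter.mp hv
          exact Finset.mem_filter.mpr ⟨this.1, this.2.trans hpc⟩
        have hcardlt : (T.filter (fun v => v < p)).card < m := by
          rw [← hcard]
          apply Finset.card_lt_card
          refine ⟨hsub, fun hss => ?_⟩
          have := Finset.mem_filter.mp (hss hpS)
          exact lt_irrefl p this.2
        have h1 : f x ≤ f (fun i => max (x i) (min (y i) p)) :=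
          ih _ hcardlt p hpT rfl
        have hyc : ∀ i, y i ≤ p ∨ c ≤ y i := by
          intro i
          rcases lt_or_ge (y i) c with h | h
          · left
            exact S.le_max' _ (Finset.mem_filter.mpr
              ⟨Finset.mem_image_of_mem _ (Finset.mem_univ _), h⟩)
          · right; exact h
        have hcom := step_comono x y hxy p c hpc hyc
        have h2 := hf (fun i => max (x i) (min (y i) p)) (fun i => min (y i) c)
          (hmemz p (hmemT p hpT)) (fun i => mem_min (hy i) (hmemT c hcT)) hcom
        have h3 : (fun i => max ((fun i => max (x i) (min (y i) p)) i)
            ((fun i => min (y i) c) i)) = fun i => max (x i) (min (y i) c) := by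
          funext i; exact max_min_join _ _ _ _ hpc.le
        rw [h3] at h2
        calc f x ≤ f (fun i => max (x i) (min (y i) p)) := h1
          _ ≤ _ := by rw [h2]; exact le_max_left _ _
  have hmax := key _ (T.max' hTne) (T.max'_mem hTne) rfl
  have hend : (fun i => max (x i) (min (y i) (T.max' hTne))) = y := by
    funext i
    rw [min_eq_left (T.le_max' _ (Finset.mem_image_of_mem _ (Finset.mem_univ _))),
      max_eq_right (hxy i)]
  rwa [hend] at hmax


theorem statement7 (n : ℕ) (hn : 0 < n) (I : Set ℝ) (hI : I.OrdConnected)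
    (hInt : ∃ a b : ℝ, a ∈ I ∧ b ∈ I ∧ a < b) (f : (Fin n → ℝ) → ℝ)
    (hf : ComonMaxitiveOn I f ∨ ComonMinitiveOn I f) :
    NondecreasingOn I f := by
  rcases hf with hf | hf
  · exact maxitive_nondecreasing hn I f hf
  · -- dualize
    set J : Set ℝ := {t | -t ∈ I} with hJ
    set g : (Fin n → ℝ) → ℝ := fun u => -(f (fun i => -(u i))) with hg
    have hgmax : ComonMaxitiveOn J g := by
      intro u v hu hv huv
      have h := hf (fun i => -(u i)) (fun i => -(v i)) (fun i => hu i) (fun i => hv i)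
        (comono_neg huv)
      have heq : (fun i => min ((fun i => -(u i)) i) ((fun i => -(v i)) i)) =
          fun i => -((fun i => max (u i) (v i)) i) := by
        funext i; simp [min_neg_neg]
      rw [heq] at h
      simp only [hg]
      rw [h]
      exact (max_neg_neg _ _).symm
    have := maxitive_nondecreasing hn J g hgmax
    intro x y hx hy hxy
    have h := this (fun i => -(y i)) (fun i => -(x i))
      (fun i => by simp [hJ, hy i]) (fun i => by simp [hJ, hx i])
      (fun i => neg_le_neg (hxy i))
    simp only [hg, neg_neg, neg_le_neg_iff] at h
    convert h using 2 <;> funext i <;> simp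
end

section
/- Assume I = [a,b] ⊆ ℝ. A function f : Iⁿ → ℝ is comonotonic maxitive if and only if there exists a nondecreasing function g : Iⁿ → ℝ such that f(x) = ⋁_{S⊆X} g(e_S ∧ ⋀_{i∈S} x_i) for all x ∈ Iⁿ (with the convention that ⋀_{i∈∅} x_i = b); in that case one may take g = f. -/
section Helpers
open Finset

variable {n : ℕ} {a b : ℝ}

/-- Building block tuple `e_S ∧ c`. -/
def eT (a b : ℝ) {n : ℕ} (S : Finset (Fin n)) (c : ℝ) : Fin n → ℝ :=
  fun i => min (if i ∈ S then b else a) c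

lemma comon_of_common (w x y : Fin n → ℝ)
    (hx : ∀ s t, w s ≤ w t → x s ≤ x t) (hy : ∀ s t, w s ≤ w t → y s ≤ y t) :
    Comonotone x y :=
  ⟨Tuple.sort w, fun _ _ hij => hx _ _ (Tuple.monotone_sort w hij),
    fun _ _ hij => hy _ _ (Tuple.monotone_sort w hij)⟩

lemma eT_mem (hab : a ≤ b) {S : Finset (Fin n)} {c : ℝ} (hc : c ∈ Set.Icc a b) (i : Fin n) :
    eT a b S c i ∈ Set.Icc a b := by
  unfold eT
  constructor
  · exact le_min (by split_ifs <;> [exact hab; exact le_rfl]) hc.1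
  · exact le_trans (min_le_right _ _) hc.2

lemma eT_le_eT (hab : a ≤ b) {S T : Finset (Fin n)} {c c' : ℝ} (hcc : c ≤ c')
    {s t : Fin n} (h : s ∈ S → t ∈ T) (hST : t ∈ S → t ∈ T) : eT a b S c s ≤ eT a b T c' t := by
  unfold eT
  by_cases hs : s ∈ S
  · simp only [hs, h hs, if_true]
    exact min_le_min le_rfl hcc
  · simp only [hs, if_false]
    exact le_min (le_trans (min_le_left _ _) (by split_ifs <;> [exact hab; exact le_rfl]))
      (le_trans (min_le_right _ _) hcc)

lemma eT_ptle (hab : a ≤ b) {S T : Finset (Fin n)} {c c' : ℝ} (hcc : c ≤ c')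
    (hST : S ⊆ T) (i : Fin n) : eT a b S c i ≤ eT a b T c' i :=
  eT_le_eT hab hcc (fun h => hST h) (fun h => hST h)

lemma eT_comon (hab : a ≤ b) {S T : Finset (Fin n)} (hST : S ⊆ T) (c c' : ℝ) :
    Comonotone (eT a b S c) (eT a b T c') := by
  have key : ∀ s t : Fin n,
      ((if s ∈ S then (1:ℝ) else 0) + (if s ∈ T then 1 else 0)) ≤
      ((if t ∈ S then (1:ℝ) else 0) + (if t ∈ T then 1 else 0)) →
      (s ∈ S → t ∈ S) ∧ (s ∈ T → t ∈ T) := by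
    intro s t hw
    constructor
    · intro hs
      by_contra ht
      simp only [hs, hST hs, if_true] at hw
      split_ifs at hw <;> simp_all <;> linarith
    · intro hs
      by_contra ht
      have ht' : t ∉ S := fun h => ht (hST h)
      simp only [hs, ht, ht', if_true, if_false] at hw
      split_ifs at hw <;> linarith
  exact comon_of_common _ _ _
    (fun s t hw => eT_le_eT hab le_rfl (key s t hw).1 (fun h => h))
    (fun s t hw => eT_le_eT hab le_rfl (key s t hw).2 (fun h => h))

end Helpers

section Helpers2
open Finset

variable {n : ℕ} {a b : ℝ} {f : (Fin n → ℝ) → ℝ}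

lemma infWith_mem (hab : a ≤ b) {x : Fin n → ℝ} (hx : ∀ i, x i ∈ Set.Icc a b)
    (S : Finset (Fin n)) : infWith b S x ∈ Set.Icc a b := by
  unfold infWith; split_ifs with h
  · obtain ⟨j, hj⟩ := h
    exact ⟨Finset.le_inf' _ _ fun i _ => (hx i).1, le_trans (Finset.inf'_le _ hj) (hx j).2⟩
  · exact ⟨hab, le_rfl⟩

lemma infWith_mono {x y : Fin n → ℝ} (hxy : ∀ i, x i ≤ y i) (S : Finset (Fin n)) :
    infWith b S x ≤ infWith b S y := by
  unfold infWith; split_ifs with h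
  · exact Finset.le_inf' _ _ fun i hi => le_trans (Finset.inf'_le _ hi) (hxy i)
  · exact le_rfl

lemma inf'_sorted (σ : Equiv.Perm (Fin n)) {x : Fin n → ℝ} (hx : Monotone (x ∘ σ))
    {S : Finset (Fin n)} (hS : S.Nonempty) :
    S.inf' hS x = x (σ ((S.image ⇑σ.symm).min' (hS.image _))) := by
  set m := (S.image ⇑σ.symm).min' (hS.image _) with hm
  have hmS : σ m ∈ S := by
    have := Finset.min'_mem (S.image ⇑σ.symm) (hS.image _)
    rw [← hm] at this
    obtain ⟨j, hj, hje⟩ := Finset.mem_image.1 this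
    rw [← hje]; simpa using hj
  refine le_antisymm (Finset.inf'_le _ hmS) (Finset.le_inf' _ _ fun j hj => ?_)
  have : m ≤ σ.symm j := Finset.min'_le _ _ (Finset.mem_image_of_mem _ hj)
  simpa using hx this

lemma eT_max_same (hab : a ≤ b) {S : Finset (Fin n)} {c c' : ℝ} :
    (fun i => max (eT a b S c i) (eT a b S c' i)) = eT a b S (max c c') := by
  funext i
  rcases le_total c c' with h | h
  · rw [max_eq_right h, max_eq_right (eT_ptle hab h subset_rfl i)]
  · rw [max_eq_left h, max_eq_left (eT_ptle hab h subset_rfl i)]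

lemma f_eT_mono (hf : ComonMaxitiveOn (Set.Icc a b) f) (hab : a ≤ b)
    {S T : Finset (Fin n)} (hST : S ⊆ T) {c c' : ℝ} (hc : c ∈ Set.Icc a b)
    (hc' : c' ∈ Set.Icc a b) (hcc : c ≤ c') : f (eT a b S c) ≤ f (eT a b T c') := by
  have h1 := hf (eT a b S c) (eT a b T c') (eT_mem hab hc) (eT_mem hab hc')
    (eT_comon hab hST c c')
  have h2 : (fun i => max (eT a b S c i) (eT a b T c' i)) = eT a b T c' := by
    funext i; exact max_eq_right (eT_ptle hab hcc hST i)
  rw [h2] at h1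
  rw [h1]
  exact le_max_left _ _

/-- comonotonic maxitivity over a finite family of tuples all sorted by `σ`. -/
lemma sup_family (hf : ComonMaxitiveOn (Set.Icc a b) f) (σ : Equiv.Perm (Fin n))
    {ι : Type} {K : Finset ι} (hK : K.Nonempty) (y : ι → Fin n → ℝ)
    (hmem : ∀ k ∈ K, ∀ i, y k i ∈ Set.Icc a b)
    (hmono : ∀ k ∈ K, Monotone (y k ∘ σ)) :
    f (fun j => K.sup' hK (fun k => y k j)) = K.sup' hK (fun k => f (y k)) := by
  classical
  induction hK using Finset.Nonempty.cons_induction with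
  | singleton k => simp
  | cons k s hks hs ih =>
    have hmem' : ∀ m ∈ s, ∀ i, y m i ∈ Set.Icc a b := fun m hm => hmem m (by simp [hm])
    have hmono' : ∀ m ∈ s, Monotone (y m ∘ σ) := fun m hm => hmono m (by simp [hm])
    have hzmem : ∀ i, (fun j => s.sup' hs (fun m => y m j)) i ∈ Set.Icc a b := by
      intro i
      show s.sup' hs (fun m => y m i) ∈ Set.Icc a b
      obtain ⟨m, hm⟩ := hs
      exact ⟨le_trans (hmem' m hm i).1 (Finset.le_sup' (fun m => y m i) hm),
        Finset.sup'_le _ _ fun m' hm' => (hmem' m' hm' i).2⟩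
    have hcom : Comonotone (y k) (fun j => s.sup' hs (fun m => y m j)) := by
      refine ⟨σ, hmono k (by simp), ?_⟩
      intro i j hij
      show s.sup' hs (fun m => y m (σ i)) ≤ s.sup' hs (fun m => y m (σ j))
      exact Finset.sup'_le _ _ fun m hm =>
        le_trans (hmono' m hm hij) (Finset.le_sup' (fun m' => y m' (σ j)) hm)
    have h1 := hf (y k) (fun j => s.sup' hs (fun m => y m j))
      (hmem k (by simp)) hzmem hcom
    have harg : (fun j => (Finset.cons k s hks).sup' (by simp) fun m => y m j)
        = fun i => max (y k i) ((fun j => s.sup' hs fun m => y m j) i) := by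
      funext j
      rw [Finset.sup'_cons]
    rw [harg, h1, Finset.sup'_cons, ih hmem' hmono']
end Helpers2
section Helpers3
open Finset

variable {n : ℕ} {a b : ℝ} {f : (Fin n → ℝ) → ℝ}

lemma SUp_mem {σ : Equiv.Perm (Fin n)} {k : ℕ} {j : Fin n} :
    j ∈ SUp σ k ↔ k ≤ (σ.symm j : ℕ) := by
  unfold SUp
  simp only [Finset.mem_image, Finset.mem_filter, Finset.mem_univ, true_and]
  constructor
  · rintro ⟨m, hm, rfl⟩; simpa using hm
  · intro h; exact ⟨σ.symm j, h, by simp⟩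

lemma repr_self (hab : a < b) (hf : ComonMaxitiveOn (Set.Icc a b) f) (hn : 0 < n)
    {x : Fin n → ℝ} (hx : ∀ i, x i ∈ Set.Icc a b) :
    f x = Finset.univ.sup' ⟨∅, Finset.mem_univ ∅⟩
      (fun S : Finset (Fin n) => f (eT a b S (infWith b S x))) := by
  set σ := Tuple.sort x with hσdef
  have hσ : Monotone (x ∘ σ) := Tuple.monotone_sort x
  have hKn : (Finset.univ : Finset (Fin n)).Nonempty := ⟨⟨0, hn⟩, Finset.mem_univ _⟩
  set y : Fin n → Fin n → ℝ := fun k => eT a b (SUp σ (k : ℕ)) (x (σ k)) with hy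
  have hmono : ∀ k ∈ (Finset.univ : Finset (Fin n)), Monotone (y k ∘ σ) := by
    intro k _ i j hij
    show eT a b (SUp σ (k:ℕ)) (x (σ k)) (σ i) ≤ eT a b (SUp σ (k:ℕ)) (x (σ k)) (σ j)
    refine eT_le_eT hab.le le_rfl ?_ (fun h => h)
    intro hi
    rw [SUp_mem] at hi ⊢
    simp only [Equiv.symm_apply_apply] at hi ⊢
    exact le_trans hi hij
  have hmem : ∀ k ∈ (Finset.univ : Finset (Fin n)), ∀ i, y k i ∈ Set.Icc a b :=
    fun k _ i => eT_mem hab.le (hx (σ k)) i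
  have hsup : (fun j => Finset.univ.sup' hKn (fun k => y k j)) = x := by
    funext j
    refine le_antisymm (Finset.sup'_le _ _ fun k _ => ?_) ?_
    · show min (if j ∈ SUp σ (k:ℕ) then b else a) (x (σ k)) ≤ x j
      by_cases hj : j ∈ SUp σ (k:ℕ)
      · rw [if_pos hj]
        refine le_trans (min_le_right _ _) ?_
        rw [SUp_mem] at hj
        have := hσ (show k ≤ σ.symm j from hj)
        simpa using this
      · rw [if_neg hj]; exact le_trans (min_le_left _ _) (hx j).1
    · refine le_trans ?_ (Finset.le_sup' (fun k => y k j) (Finset.mem_univ (σ.symm j)))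
      show x j ≤ min (if j ∈ SUp σ ((σ.symm j : Fin n):ℕ) then b else a) (x (σ (σ.symm j)))
      rw [if_pos (SUp_mem.2 le_rfl), Equiv.apply_symm_apply]
      exact le_min (hx j).2 le_rfl
  have hdecomp := sup_family hf σ hKn y hmem hmono
  rw [hsup] at hdecomp
  rw [hdecomp]
  refine le_antisymm (Finset.sup'_le _ _ fun k _ => ?_) (Finset.sup'_le _ _ fun S _ => ?_)
  · have hne : (SUp σ (k:ℕ)).Nonempty := ⟨σ k, SUp_mem.2 (by simp)⟩
    have hiw : infWith b (SUp σ (k:ℕ)) x = x (σ k) := by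
      unfold infWith; rw [dif_pos hne]
      refine le_antisymm (Finset.inf'_le _ (SUp_mem.2 (by simp)))
        (Finset.le_inf' _ _ fun j hj => ?_)
      rw [SUp_mem] at hj
      have := hσ (show k ≤ σ.symm j from hj)
      simpa using this
    refine le_trans ?_ (Finset.le_sup'
      (fun S : Finset (Fin n) => f (eT a b S (infWith b S x)))
      (Finset.mem_univ (SUp σ (k:ℕ))))
    rw [hiw]
  · rcases S.eq_empty_or_nonempty with rfl | hS
    · have h0 : eT a b (∅ : Finset (Fin n)) (infWith b ∅ x) = eT a b ∅ a := by
        funext i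
        show min (if i ∈ (∅ : Finset (Fin n)) then b else a) _ = min _ a
        simp only [Finset.notMem_empty, if_false]
        rw [min_eq_left, min_self]
        unfold infWith
        simp [hab.le]
      rw [h0]
      set k0 : Fin n := ⟨0, hn⟩
      refine le_trans (f_eT_mono hf hab.le (Finset.empty_subset (SUp σ (k0:ℕ)))
        ⟨le_rfl, hab.le⟩ (hx (σ k0)) (hx (σ k0)).1)
        (Finset.le_sup' (fun k : Fin n => f (y k)) (Finset.mem_univ k0))
    · set m := (S.image ⇑σ.symm).min' (hS.image _) with hm
      have hiw : infWith b S x = x (σ m) := by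
        unfold infWith; rw [dif_pos hS]; exact inf'_sorted σ hσ hS
      have hsub : S ⊆ SUp σ (m:ℕ) := by
        intro j hj
        have h1 : m ≤ σ.symm j := Finset.min'_le _ _ (Finset.mem_image_of_mem _ hj)
        exact SUp_mem.2 h1
      rw [hiw]
      exact le_trans (f_eT_mono hf hab.le hsub (hx (σ m)) (hx (σ m)) le_rfl)
        (Finset.le_sup' (fun k : Fin n => f (y k)) (Finset.mem_univ m))

end Helpers3
section Helpers4
open Finset

variable {n : ℕ} {a b : ℝ} {f : (Fin n → ℝ) → ℝ}

lemma f_nondecr (hab : a < b) (hn : 0 < n) (hf : ComonMaxitiveOn (Set.Icc a b) f) :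
    NondecreasingOn (Set.Icc a b) f := by
  intro x y hx hy hxy
  rw [repr_self hab hf hn hx, repr_self hab hf hn hy]
  refine Finset.sup'_le _ _ fun S _ => le_trans ?_
    (Finset.le_sup' (fun S : Finset (Fin n) => f (eT a b S (infWith b S y)))
      (Finset.mem_univ S))
  exact f_eT_mono hf hab.le subset_rfl (infWith_mem hab.le hx S) (infWith_mem hab.le hy S)
    (infWith_mono hxy S)

lemma backward (hab : a < b) {g : (Fin n → ℝ) → ℝ}
    (hg : NondecreasingOn (Set.Icc a b) g)
    (hrep : ∀ x : Fin n → ℝ, (∀ i, x i ∈ Set.Icc a b) →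
      f x = Finset.univ.sup' ⟨∅, Finset.mem_univ ∅⟩
        (fun S : Finset (Fin n) => g (eT a b S (infWith b S x)))) :
    ComonMaxitiveOn (Set.Icc a b) f := by
  rintro x y hx hy ⟨σ, hxσ, hyσ⟩
  set z := fun i => max (x i) (y i) with hz
  have hzI : ∀ i, z i ∈ Set.Icc a b := fun i =>
    ⟨le_trans (hx i).1 (le_max_left _ _), max_le (hx i).2 (hy i).2⟩
  have hzσ : Monotone (z ∘ σ) := fun i j h => max_le_max (hxσ h) (hyσ h)
  have key : ∀ S : Finset (Fin n),
      infWith b S z = max (infWith b S x) (infWith b S y) := by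
    intro S
    rcases S.eq_empty_or_nonempty with rfl | hS
    · unfold infWith; simp
    · show infWith b S z = max (infWith b S x) (infWith b S y)
      unfold infWith
      rw [dif_pos hS, dif_pos hS, dif_pos hS,
        inf'_sorted σ hxσ hS, inf'_sorted σ hyσ hS, inf'_sorted σ hzσ hS]
  have hxz : f x ≤ f z := by
    rw [hrep x hx, hrep z hzI]
    refine Finset.sup'_le _ _ fun S _ => le_trans ?_
      (Finset.le_sup' (fun S : Finset (Fin n) => g (eT a b S (infWith b S z)))
        (Finset.mem_univ S))
    exact hg _ _ (eT_mem hab.le (infWith_mem hab.le hx S)) (eT_mem hab.le (infWith_mem hab.le hzI S))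
      (eT_ptle hab.le (infWith_mono (fun i => le_max_left _ _) S) subset_rfl)
  have hyz : f y ≤ f z := by
    rw [hrep y hy, hrep z hzI]
    refine Finset.sup'_le _ _ fun S _ => le_trans ?_
      (Finset.le_sup' (fun S : Finset (Fin n) => g (eT a b S (infWith b S z)))
        (Finset.mem_univ S))
    exact hg _ _ (eT_mem hab.le (infWith_mem hab.le hy S)) (eT_mem hab.le (infWith_mem hab.le hzI S))
      (eT_ptle hab.le (infWith_mono (fun i => le_max_right _ _) S) subset_rfl)
  refine le_antisymm ?_ (max_le hxz hyz)
  rw [hrep z hzI]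
  refine Finset.sup'_le _ _ fun S _ => ?_
  rw [key S]
  rcases le_total (infWith b S x) (infWith b S y) with h | h
  · rw [max_eq_right h]
    refine le_trans ?_ (le_max_right (f x) (f y))
    rw [hrep y hy]
    exact Finset.le_sup' (fun S : Finset (Fin n) => g (eT a b S (infWith b S y)))
      (Finset.mem_univ S)
  · rw [max_eq_left h]
    refine le_trans ?_ (le_max_left (f x) (f y))
    rw [hrep x hx]
    exact Finset.le_sup' (fun S : Finset (Fin n) => g (eT a b S (infWith b S x)))
      (Finset.mem_univ S)

end Helpers4

theorem statement11' (n : ℕ) (hn : 0 < n) (a b : ℝ) (hab : a < b)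
    (f : (Fin n → ℝ) → ℝ) :
    (ComonMaxitiveOn (Set.Icc a b) f ↔
      ∃ g : (Fin n → ℝ) → ℝ, NondecreasingOn (Set.Icc a b) g ∧
        ∀ x : Fin n → ℝ, (∀ i, x i ∈ Set.Icc a b) →
          f x = Finset.sup' Finset.univ ⟨∅, Finset.mem_univ ∅⟩
            (fun S : Finset (Fin n) =>
              g (fun i => min (if i ∈ S then b else a) (infWith b S x))))
    ∧
    (ComonMaxitiveOn (Set.Icc a b) f →
      ∀ x : Fin n → ℝ, (∀ i, x i ∈ Set.Icc a b) →
        f x = Finset.sup' Finset.univ ⟨∅, Finset.mem_univ ∅⟩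
          (fun S : Finset (Fin n) =>
            f (fun i => min (if i ∈ S then b else a) (infWith b S x)))) := by
  constructor
  · constructor
    · intro hf
      exact ⟨f, f_nondecr hab hn hf, fun x hx => repr_self hab hf hn hx⟩
    · rintro ⟨g, hg, hrep⟩
      exact backward hab hg (fun x hx => hrep x hx)
  · intro hf x hx
    exact repr_self hab hf hn hx

theorem statement11 (n : ℕ) (hn : 0 < n) (a b : ℝ) (hab : a < b)
    (f : (Fin n → ℝ) → ℝ) :
    (ComonMaxitiveOn (Set.Icc a b) f ↔
      ∃ g : (Fin n → ℝ) → ℝ, NondecreasingOn (Set.Icc a b) g ∧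
        ∀ x : Fin n → ℝ, (∀ i, x i ∈ Set.Icc a b) →
          f x = Finset.sup' Finset.univ ⟨∅, Finset.mem_univ ∅⟩
            (fun S : Finset (Fin n) =>
              g (fun i => min (if i ∈ S then b else a) (infWith b S x))))
    ∧
    (ComonMaxitiveOn (Set.Icc a b) f →
      ∀ x : Fin n → ℝ, (∀ i, x i ∈ Set.Icc a b) →
        f x = Finset.sup' Finset.univ ⟨∅, Finset.mem_univ ∅⟩
          (fun S : Finset (Fin n) =>
            f (fun i => min (if i ∈ S then b else a) (infWith b S x)))) := by
  constructor
  · constructor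
    · intro hf
      exact ⟨f, f_nondecr hab hn hf, fun x hx => repr_self hab hf hn hx⟩
    · rintro ⟨g, hg, hrep⟩
      exact backward hab hg (fun x hx => hrep x hx)
  · intro hf x hx
    exact repr_self hab hf hn hx
end

section
/- Assume [0,1] ⊆ I ⊆ ℝ₊ or [−1,1] ⊆ I. A function f : Iⁿ → ℝ is a signed Choquet integral if and only if: (i) f is comonotonically modular; (ii) f(0) = 0 and f(x·1_S) = sign(x)·x·f(sign(x)·1_S) for all x ∈ I and S ⊆ X; and (iii) if [−1,1] ⊆ I, then f(1_{X∖S}) = f(1) + f(−1_S) for all S ⊆ X. -/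
lemma mem_SUp {n : ℕ} (σ : Equiv.Perm (Fin n)) (i : ℕ) (j : Fin n) :
    j ∈ SUp σ i ↔ i ≤ (σ.symm j : ℕ) := by
  simp only [SUp, Finset.mem_image, Finset.mem_filter, Finset.mem_univ, true_and]
  constructor
  · rintro ⟨a, ha, rfl⟩; simpa using ha
  · intro h; exact ⟨σ.symm j, h, by simp⟩

lemma mem_SDown {n : ℕ} (σ : Equiv.Perm (Fin n)) (i : ℕ) (j : Fin n) :
    j ∈ SDown σ i ↔ (σ.symm j : ℕ) < i := by
  simp only [SDown, Finset.mem_image, Finset.mem_filter, Finset.mem_univ, true_and]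
  constructor
  · rintro ⟨a, ha, rfl⟩; simpa using ha
  · intro h; exact ⟨σ.symm j, h, by simp⟩

lemma SDown_compl {n : ℕ} (σ : Equiv.Perm (Fin n)) (k : ℕ) :
    (SDown σ k)ᶜ = SUp σ k := by
  ext j; simp [mem_SUp, mem_SDown, Finset.mem_compl, not_lt]

lemma indTuple_zero {n : ℕ} (S : Finset (Fin n)) : indTuple S (0:ℝ) = fun _ => 0 := by
  funext j; simp [indTuple]

lemma telescopeNonneg {n : ℕ} (I : Set ℝ) (h0I : (0:ℝ) ∈ I) (f : (Fin n → ℝ) → ℝ)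
    (hm : ComonModularOn I f)
    (hA : ∀ c ∈ I, 0 ≤ c → ∀ S : Finset (Fin n), f (indTuple S c) = c * f (indTuple S 1))
    (hz : f (fun _ => 0) = 0)
    (σ : Equiv.Perm (Fin n)) (x : Fin n → ℝ) (hxI : ∀ i, x i ∈ I) (hx0 : ∀ i, 0 ≤ x i)
    (hmono : Monotone (x ∘ σ)) :
    ∀ m k : ℕ, k + m = n →
      f (fun j => if k ≤ (σ.symm j : ℕ) then x j else 0) =
        ∑ i ∈ Finset.univ.filter (fun i : Fin n => k ≤ (i:ℕ)),
          x (σ i) * (f (indTuple (SUp σ (i:ℕ)) 1) - f (indTuple (SUp σ ((i:ℕ)+1)) 1)) := by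
  intro m
  induction m with
  | zero =>
    intro k hk
    have ht : (fun j : Fin n => if k ≤ (σ.symm j : ℕ) then x j else 0) = fun _ => 0 := by
      funext j
      have : ((σ.symm j : Fin n) : ℕ) < n := (σ.symm j).is_lt
      rw [if_neg (by omega)]
    have hs : Finset.univ.filter (fun i : Fin n => k ≤ (i:ℕ)) = ∅ := by
      ext i; simp only [Finset.mem_filter, Finset.mem_univ, true_and, Finset.notMem_empty,
        iff_false]
      have := i.is_lt; omega
    rw [ht, hs, hz, Finset.sum_empty]
  | succ m ih =>
    intro k hk
    have hkn : k < n := by omega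
    have IH := ih (k+1) (by omega)
    set ck := x (σ ⟨k, hkn⟩) with hck
    have hck0 : 0 ≤ ck := hx0 _
    have hckI : ck ∈ I := hxI _
    -- the two tuples
    set a : Fin n → ℝ := indTuple (SUp σ k) ck with ha
    set b : Fin n → ℝ := fun j => if k + 1 ≤ (σ.symm j : ℕ) then x j else 0 with hb
    have haI : ∀ i, a i ∈ I := by
      intro i; rw [ha]; unfold indTuple; split <;> assumption
    have hbI : ∀ i, b i ∈ I := by
      intro i; rw [hb]; dsimp only; split
      · exact hxI i
      · exact h0I
    -- key: for j with k ≤ σ.symm j, ck ≤ x j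
    have hkey : ∀ j : Fin n, k ≤ (σ.symm j : ℕ) → ck ≤ x j := by
      intro j hj
      have : x (σ ⟨k, hkn⟩) ≤ x (σ (σ.symm j)) := hmono (show (⟨k, hkn⟩ : Fin n) ≤ σ.symm j from hj)
      simpa using this
    have hcomon : Comonotone a b := by
      refine ⟨σ, ?_, ?_⟩
      · intro i1 i2 h12
        show a (σ i1) ≤ a (σ i2)
        rw [ha]; unfold indTuple
        simp only [mem_SUp, Equiv.symm_apply_apply]
        by_cases h1 : k ≤ (i1 : ℕ)
        · rw [if_pos h1, if_pos (le_trans h1 h12)]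
        · rw [if_neg h1]; split
          · exact hck0
          · exact le_refl 0
      · intro i1 i2 h12
        show b (σ i1) ≤ b (σ i2)
        rw [hb]; dsimp only
        simp only [Equiv.symm_apply_apply]
        by_cases h1 : k + 1 ≤ (i1 : ℕ)
        · rw [if_pos h1, if_pos (le_trans h1 h12)]
          exact hmono h12
        · rw [if_neg h1]; split
          · exact hx0 _
          · exact le_refl 0
    have hmin : (fun i => min (a i) (b i)) = indTuple (SUp σ (k+1)) ck := by
      funext j
      rw [ha, hb]; unfold indTuple
      simp only [mem_SUp]
      rcases lt_trichotomy ((σ.symm j : ℕ)) k with h | h | h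
      · rw [if_neg (by omega), if_neg (by omega), if_neg (by omega), min_self]
      · rw [if_pos (by omega), if_neg (by omega), if_neg (by omega)]
        exact min_eq_right hck0
      · rw [if_pos (by omega), if_pos (by omega), if_pos (by omega)]
        exact min_eq_left (hkey j (by omega))
    have hmax : (fun i => max (a i) (b i)) = fun j => if k ≤ (σ.symm j : ℕ) then x j else 0 := by
      funext j
      rw [ha, hb]; unfold indTuple
      simp only [mem_SUp]
      rcases lt_trichotomy ((σ.symm j : ℕ)) k with h | h | h
      · rw [if_neg (by omega), if_neg (by omega), if_neg (by omega), max_self]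
      · rw [if_pos (by omega), if_neg (by omega), if_pos (by omega)]
        have hj : j = σ ⟨k, hkn⟩ := by
          have : σ.symm j = ⟨k, hkn⟩ := Fin.ext h
          rw [← this, Equiv.apply_symm_apply]
        rw [hj]
        exact max_eq_left hck0
      · rw [if_pos (by omega), if_pos (by omega), if_pos (by omega)]
        exact max_eq_right (hkey j (by omega))
    have hmod := hm a b haI hbI hcomon
    rw [hmin, hmax] at hmod
    have hfa : f a = ck * f (indTuple (SUp σ k) 1) := hA ck hckI hck0 _
    have hfmin : f (indTuple (SUp σ (k+1)) ck) = ck * f (indTuple (SUp σ (k+1)) 1) :=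
      hA ck hckI hck0 _
    have hfb : f b = ∑ i ∈ Finset.univ.filter (fun i : Fin n => k + 1 ≤ (i:ℕ)),
          x (σ i) * (f (indTuple (SUp σ (i:ℕ)) 1) - f (indTuple (SUp σ ((i:ℕ)+1)) 1)) := IH
    have hsplit : Finset.univ.filter (fun i : Fin n => k ≤ (i:ℕ)) =
        insert (⟨k, hkn⟩ : Fin n) (Finset.univ.filter (fun i : Fin n => k + 1 ≤ (i:ℕ))) := by
      ext i
      simp only [Finset.mem_filter, Finset.mem_univ, true_and, Finset.mem_insert, Fin.ext_iff]
      omega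
    rw [hsplit, Finset.sum_insert (by simp)]
    have : f (fun j => if k ≤ (σ.symm j : ℕ) then x j else 0)
        = f a + f b - f (indTuple (SUp σ (k+1)) ck) := by linarith
    rw [this, hfa, hfmin, hfb]
    ring

lemma telescopeNonpos {n : ℕ} (I : Set ℝ) (h0I : (0:ℝ) ∈ I) (f : (Fin n → ℝ) → ℝ)
    (hm : ComonModularOn I f)
    (hB : ∀ c ∈ I, c ≤ 0 → ∀ S : Finset (Fin n),
      f (indTuple S c) = c * (f (indTuple Finset.univ 1) - f (indTuple Sᶜ 1)))
    (hz : f (fun _ => 0) = 0)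
    (σ : Equiv.Perm (Fin n)) (x : Fin n → ℝ) (hxI : ∀ i, x i ∈ I) (hx0 : ∀ i, x i ≤ 0)
    (hmono : Monotone (x ∘ σ)) :
    ∀ k : ℕ, k ≤ n →
      f (fun j => if (σ.symm j : ℕ) < k then x j else 0) =
        ∑ i ∈ Finset.univ.filter (fun i : Fin n => (i:ℕ) < k),
          x (σ i) * (f (indTuple (SUp σ (i:ℕ)) 1) - f (indTuple (SUp σ ((i:ℕ)+1)) 1)) := by
  intro k
  induction k with
  | zero =>
    intro _
    have ht : (fun j : Fin n => if (σ.symm j : ℕ) < 0 then x j else 0) = fun _ => 0 := by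
      funext j; rw [if_neg (by omega)]
    have hs : Finset.univ.filter (fun i : Fin n => (i:ℕ) < 0) = ∅ := by
      ext i; simp
    rw [ht, hs, hz, Finset.sum_empty]
  | succ k ih =>
    intro hk1
    have hkn : k < n := by omega
    have IH := ih (by omega)
    set ck := x (σ ⟨k, hkn⟩) with hck
    have hck0 : ck ≤ 0 := hx0 _
    have hckI : ck ∈ I := hxI _
    set a : Fin n → ℝ := fun j => if (σ.symm j : ℕ) < k then x j else 0 with ha
    set b : Fin n → ℝ := indTuple (SDown σ (k+1)) ck with hb
    have haI : ∀ i, a i ∈ I := by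
      intro i; rw [ha]; dsimp only; split
      · exact hxI i
      · exact h0I
    have hbI : ∀ i, b i ∈ I := by
      intro i; rw [hb]; unfold indTuple; split <;> assumption
    have hkey : ∀ j : Fin n, (σ.symm j : ℕ) ≤ k → x j ≤ ck := by
      intro j hj
      have : x (σ (σ.symm j)) ≤ x (σ ⟨k, hkn⟩) :=
        hmono (show σ.symm j ≤ (⟨k, hkn⟩ : Fin n) from hj)
      simpa using this
    have hcomon : Comonotone a b := by
      refine ⟨σ, ?_, ?_⟩
      · intro i1 i2 h12
        show a (σ i1) ≤ a (σ i2)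
        rw [ha]; dsimp only
        simp only [Equiv.symm_apply_apply]
        by_cases h2 : (i2 : ℕ) < k
        · rw [if_pos (by omega), if_pos h2]
          exact hmono h12
        · rw [if_neg h2]; split
          · exact hx0 _
          · exact le_refl 0
      · intro i1 i2 h12
        show b (σ i1) ≤ b (σ i2)
        rw [hb]; unfold indTuple
        simp only [mem_SDown, Equiv.symm_apply_apply]
        by_cases h2 : (i2 : ℕ) < k + 1
        · rw [if_pos (by omega), if_pos h2]
        · rw [if_neg h2]; split
          · exact hck0
          · exact le_refl 0
    have hmin : (fun i => min (a i) (b i)) =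
        fun j => if (σ.symm j : ℕ) < k + 1 then x j else 0 := by
      funext j
      rw [ha, hb]; unfold indTuple
      simp only [mem_SDown]
      rcases lt_trichotomy ((σ.symm j : ℕ)) k with h | h | h
      · rw [if_pos h, if_pos (by omega), if_pos (by omega)]
        exact min_eq_left (hkey j (by omega))
      · rw [if_neg (by omega), if_pos (by omega), if_pos (by omega)]
        have hj : j = σ ⟨k, hkn⟩ := by
          have : σ.symm j = ⟨k, hkn⟩ := Fin.ext h
          rw [← this, Equiv.apply_symm_apply]
        rw [hj]
        exact min_eq_right hck0
      · rw [if_neg (by omega), if_neg (by omega), if_neg (by omega), min_self]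
    have hmax : (fun i => max (a i) (b i)) = indTuple (SDown σ k) ck := by
      funext j
      rw [ha, hb]; unfold indTuple
      simp only [mem_SDown]
      rcases lt_trichotomy ((σ.symm j : ℕ)) k with h | h | h
      · rw [if_pos h, if_pos (by omega), if_pos (by omega)]
        exact max_eq_right (hkey j (by omega))
      · rw [if_neg (by omega), if_pos (by omega), if_neg (by omega)]
        exact max_eq_left hck0
      · rw [if_neg (by omega), if_neg (by omega), if_neg (by omega), max_self]
    have hmod := hm a b haI hbI hcomon
    rw [hmin, hmax] at hmod
    have hfb : f b = ck * (f (indTuple Finset.univ 1) - f (indTuple (SUp σ (k+1)) 1)) := by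
      rw [hb, hB ck hckI hck0, SDown_compl]
    have hfmax : f (indTuple (SDown σ k) ck)
        = ck * (f (indTuple Finset.univ 1) - f (indTuple (SUp σ k) 1)) := by
      rw [hB ck hckI hck0, SDown_compl]
    have hsplit : Finset.univ.filter (fun i : Fin n => (i:ℕ) < k + 1) =
        insert (⟨k, hkn⟩ : Fin n) (Finset.univ.filter (fun i : Fin n => (i:ℕ) < k)) := by
      ext i
      simp only [Finset.mem_filter, Finset.mem_univ, true_and, Finset.mem_insert, Fin.ext_iff]
      omega
    rw [hsplit, Finset.sum_insert (by simp)]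
    have : f (fun j => if (σ.symm j : ℕ) < k + 1 then x j else 0)
        = f a + f b - f (indTuple (SDown σ k) ck) := by linarith
    rw [this, hfb, hfmax, ha, IH]
    ring

theorem statement13 (n : ℕ) (hn : 0 < n) (I : Set ℝ) (hI : I.OrdConnected)
    (hcase : (Set.Icc (0 : ℝ) 1 ⊆ I ∧ I ⊆ Set.Ici 0) ∨ Set.Icc (-1 : ℝ) 1 ⊆ I)
    (f : (Fin n → ℝ) → ℝ) :
    IsSignedChoquetOn I f ↔
      (ComonModularOn I f ∧
        (f (fun _ => 0) = 0 ∧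
          ∀ x ∈ I, ∀ S : Finset (Fin n),
            f (indTuple S x) = Real.sign x * x * f (indTuple S (Real.sign x))) ∧
        (Set.Icc (-1 : ℝ) 1 ⊆ I →
          ∀ S : Finset (Fin n),
            f (indTuple Sᶜ 1) = f (indTuple Finset.univ 1) + f (indTuple S (-1)))) := by
  have h01 : Set.Icc (0:ℝ) 1 ⊆ I := by
    rcases hcase with ⟨h, _⟩ | h
    · exact h
    · exact fun y hy => h ⟨le_trans (by norm_num) hy.1, hy.2⟩
  have h0I : (0:ℝ) ∈ I := h01 ⟨le_refl 0, zero_le_one⟩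
  have h1I : (1:ℝ) ∈ I := h01 ⟨zero_le_one, le_refl 1⟩
  constructor
  · rintro ⟨v, hv0, hP⟩
    have hf0 : f (fun _ => 0) = 0 := by
      rw [hP 1 (fun _ => 0) (fun _ => h0I) monotone_const]
      simp
    refine ⟨?_, ⟨hf0, ?_⟩, ?_⟩
    · -- comonotonic modularity
      rintro x y hxI hyI ⟨σ, hxm, hym⟩
      have hminI : ∀ i, min (x i) (y i) ∈ I := by
        intro i
        rcases min_cases (x i) (y i) with ⟨h, _⟩ | ⟨h, _⟩ <;> rw [h]
        exacts [hxI i, hyI i]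
      have hmaxI : ∀ i, max (x i) (y i) ∈ I := by
        intro i
        rcases max_cases (x i) (y i) with ⟨h, _⟩ | ⟨h, _⟩ <;> rw [h]
        exacts [hxI i, hyI i]
      have hminm : Monotone ((fun i => min (x i) (y i)) ∘ σ) :=
        fun a b hab => min_le_min (hxm hab) (hym hab)
      have hmaxm : Monotone ((fun i => max (x i) (y i)) ∘ σ) :=
        fun a b hab => max_le_max (hxm hab) (hym hab)
      rw [hP σ x hxI hxm, hP σ y hyI hym, hP σ _ hminI hminm, hP σ _ hmaxI hmaxm,
        ← Finset.sum_add_distrib, ← Finset.sum_add_distrib]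
      refine Finset.sum_congr rfl fun i _ => ?_
      rw [← add_mul, ← add_mul, min_add_max]
    · -- homogeneity
      intro c hc S
      rcases lt_trichotomy c 0 with hlt | heq | hgt
      · have hm1I : (-1:ℝ) ∈ I := by
          rcases hcase with ⟨_, hpos⟩ | h
          · exact absurd (hpos hc) (by simpa using hlt.not_ge)
          · exact h ⟨le_refl _, by norm_num⟩
        set τ := Tuple.sort (indTuple S (-1)) with hτ
        have hms : Monotone ((indTuple S (-1)) ∘ τ) := Tuple.monotone_sort _
        have heqt : indTuple S c = fun j => (-c) * indTuple S (-1) j := by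
          funext j; unfold indTuple; split <;> ring
        have hmc : Monotone ((indTuple S c) ∘ τ) := by
          rw [heqt]
          exact fun a b hab => mul_le_mul_of_nonneg_left (hms hab) (by linarith)
        have hIc : ∀ i, indTuple S c i ∈ I := by
          intro i; unfold indTuple; split; exacts [hc, h0I]
        have hIm : ∀ i, indTuple S (-1:ℝ) i ∈ I := by
          intro i; unfold indTuple; split; exacts [hm1I, h0I]
        rw [Real.sign_of_neg hlt, hP τ _ hIc hmc, hP τ _ hIm hms, Finset.mul_sum]
        refine Finset.sum_congr rfl fun i _ => ?_
        unfold indTuple; split <;> ring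
      · subst heq
        simp only [Real.sign_zero, zero_mul, mul_zero]
        rw [indTuple_zero]
        exact hf0
      · set τ := Tuple.sort (indTuple S 1) with hτ
        have hms : Monotone ((indTuple S 1) ∘ τ) := Tuple.monotone_sort _
        have heqt : indTuple S c = fun j => c * indTuple S 1 j := by
          funext j; unfold indTuple; split <;> ring
        have hmc : Monotone ((indTuple S c) ∘ τ) := by
          rw [heqt]
          exact fun a b hab => mul_le_mul_of_nonneg_left (hms hab) (by linarith)
        have hIc : ∀ i, indTuple S c i ∈ I := by
          intro i; unfold indTuple; split; exacts [hc, h0I]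
        have hIm : ∀ i, indTuple S (1:ℝ) i ∈ I := by
          intro i; unfold indTuple; split; exacts [h1I, h0I]
        rw [Real.sign_of_pos hgt, hP τ _ hIc hmc, hP τ _ hIm hms, Finset.mul_sum]
        refine Finset.sum_congr rfl fun i _ => ?_
        unfold indTuple; split <;> ring
    · -- condition (iii)
      intro h11 S
      set τ := Tuple.sort (indTuple S (-1)) with hτ
      have hms : Monotone ((indTuple S (-1)) ∘ τ) := Tuple.monotone_sort _
      have hm1I : (-1:ℝ) ∈ I := h11 ⟨le_refl _, by norm_num⟩
      have heqt : indTuple Sᶜ (1:ℝ) = fun j => 1 + indTuple S (-1) j := by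
        funext j; unfold indTuple
        by_cases h : j ∈ S <;> simp [h, Finset.mem_compl]
      have hmsc : Monotone ((indTuple Sᶜ (1:ℝ)) ∘ τ) := by
        rw [heqt]
        exact fun a b hab => add_le_add_right (hms hab) 1
      have hequ : indTuple (Finset.univ : Finset (Fin n)) (1:ℝ) = fun _ => 1 :=
        funext fun j => if_pos (Finset.mem_univ j)
      have hmu : Monotone ((indTuple (Finset.univ : Finset (Fin n)) (1:ℝ)) ∘ τ) := by
        rw [hequ]; exact monotone_const
      have hI1 : ∀ i, indTuple Sᶜ (1:ℝ) i ∈ I := by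
        intro i; unfold indTuple; split; exacts [h1I, h0I]
      have hIu : ∀ i, indTuple (Finset.univ : Finset (Fin n)) (1:ℝ) i ∈ I := by
        intro i; unfold indTuple; split; exacts [h1I, h0I]
      have hIm : ∀ i, indTuple S (-1:ℝ) i ∈ I := by
        intro i; unfold indTuple; split; exacts [hm1I, h0I]
      rw [hP τ _ hI1 hmsc, hP τ _ hIu hmu, hP τ _ hIm hms, ← Finset.sum_add_distrib]
      refine Finset.sum_congr rfl fun i _ => ?_
      unfold indTuple
      by_cases h : τ i ∈ S
      · rw [if_neg (by simp [Finset.mem_compl, h]), if_pos (Finset.mem_univ _), if_pos h]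
        ring
      · rw [if_pos (by simp [Finset.mem_compl, h]), if_pos (Finset.mem_univ _), if_neg h]
        ring
  · rintro ⟨hm, ⟨hf0, hhom⟩, hneg⟩
    refine ⟨fun S => f (indTuple S 1), ?_, ?_⟩
    · show f (indTuple (∅ : Finset (Fin n)) 1) = 0
      rw [show indTuple (∅ : Finset (Fin n)) (1:ℝ) = fun _ => 0 from
        funext fun j => by simp [indTuple]]
      exact hf0
    · intro σ x hxI hmono
      have hA : ∀ c ∈ I, 0 ≤ c → ∀ S : Finset (Fin n),
          f (indTuple S c) = c * f (indTuple S 1) := by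
        intro c hc hc0 S
        rcases eq_or_lt_of_le hc0 with h | h
        · rw [← h, indTuple_zero, hf0, zero_mul]
        · rw [hhom c hc S, Real.sign_of_pos h, one_mul]
      show f x = ∑ i : Fin n, x (σ i) *
        (f (indTuple (SUp σ (i:ℕ)) 1) - f (indTuple (SUp σ ((i:ℕ)+1)) 1))
      rcases hcase with ⟨_, hpos⟩ | h11
      · -- nonnegative case
        have hx0 : ∀ i, 0 ≤ x i := fun i => hpos (hxI i)
        have ht := telescopeNonneg I h0I f hm hA hf0 σ x hxI hx0 hmono n 0 (by omega)
        rw [show (fun j : Fin n => if 0 ≤ (σ.symm j : ℕ) then x j else 0) = x from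
          funext fun j => if_pos (Nat.zero_le _),
          show Finset.univ.filter (fun i : Fin n => 0 ≤ (i:ℕ)) = Finset.univ from by
            ext i; simp] at ht
        exact ht
      · -- centered case
        have hB : ∀ c ∈ I, c ≤ 0 → ∀ S : Finset (Fin n),
            f (indTuple S c) = c * (f (indTuple Finset.univ 1) - f (indTuple Sᶜ 1)) := by
          intro c hc hc0 S
          rcases eq_or_lt_of_le hc0 with h | h
          · rw [h, indTuple_zero, hf0, zero_mul]
          · have h1 := hhom c hc S
            rw [Real.sign_of_neg h] at h1
            have h2 := hneg h11 S
            rw [h1, show f (indTuple S (-1)) =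
              f (indTuple Sᶜ 1) - f (indTuple Finset.univ 1) from by linarith]
            ring
        have hxpI : ∀ i, max (x i) 0 ∈ I := by
          intro i; rcases le_total (x i) 0 with h | h
          · rw [max_eq_right h]; exact h0I
          · rw [max_eq_left h]; exact hxI i
        have hxmI : ∀ i, min (x i) 0 ∈ I := by
          intro i; rcases le_total (x i) 0 with h | h
          · rw [min_eq_left h]; exact hxI i
          · rw [min_eq_right h]; exact h0I
        have hsplitf : f x = f (fun i => min (x i) 0) + f (fun i => max (x i) 0) := by
          have h3 := hm x (fun _ => 0) hxI (fun _ => h0I) ⟨σ, hmono, monotone_const⟩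
          rw [hf0] at h3; linarith
        have hpmax : Monotone ((fun i => max (x i) 0) ∘ σ) :=
          fun a b hab => max_le_max (hmono hab) (le_refl 0)
        have hpmin : Monotone ((fun i => min (x i) 0) ∘ σ) :=
          fun a b hab => min_le_min (hmono hab) (le_refl 0)
        have hp := telescopeNonneg I h0I f hm hA hf0 σ (fun i => max (x i) 0) hxpI
          (fun i => le_max_right _ _) hpmax n 0 (by omega)
        rw [show (fun j : Fin n => if 0 ≤ (σ.symm j : ℕ) then max (x j) 0 else 0)
            = fun j => max (x j) 0 from funext fun j => if_pos (Nat.zero_le _),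
          show Finset.univ.filter (fun i : Fin n => 0 ≤ (i:ℕ)) = Finset.univ from by
            ext i; simp] at hp
        have hq := telescopeNonpos I h0I f hm hB hf0 σ (fun i => min (x i) 0) hxmI
          (fun i => min_le_right _ _) hpmin n (le_refl n)
        rw [show (fun j : Fin n => if (σ.symm j : ℕ) < n then min (x j) 0 else 0)
            = fun j => min (x j) 0 from funext fun j => if_pos (σ.symm j).is_lt,
          show Finset.univ.filter (fun i : Fin n => (i:ℕ) < n) = Finset.univ from by
            ext i; simp [i.is_lt]] at hq
        rw [hsplitf, hp, hq, ← Finset.sum_add_distrib]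
        refine Finset.sum_congr rfl fun i _ => ?_
        rw [← add_mul, min_add_max, add_zero]
end
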